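/- Optimal recovery of the integral from interval means on H^ω: Let ω be a concave modulus of continuity, E a nontrivial real Banach space, a < b, n ≥ 1, h > 0 with 2nh < b − a. Call knots t = (t₁,…,t_n) admissible if a ≤ t₁ − h, t_i + h < t_{i+1} − h for i = 1,…,n−1, and t_n + h ≤ b; for admissible t let I_t(f) = ( (1/(2h))∫_{t₁−h}^{t₁+h} f(u) du, …, (1/(2h))∫_{t_n−h}^{t_n+h} f(u) du ) ∈ Eⁿ. Then the infimum, over all admissible knots t and all maps Φ: Eⁿ → E, of sup_{f ∈ H^ω([a,b],E)} ‖∫_a^b f(u) du − Φ(I_t(f))‖ equals 2n·(1 − 2nh/(b−a))·∫_0^{(b−a)/(2n)} ω(t) dt. The infimum is attained at the uniform knots t*_k = a + (2k−1)(b−a)/(2n), k = 1,…,n, together with the method Φ*(y₁,…,y_n) = ((b−a)/n)·(y₁ + … + y_n). -/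

import Mathlib

open MeasureTheory Set

/-- A modulus of continuity: `ω 0 = 0`, continuous, non-decreasing and subadditive on `[0, ∞)`. -/
def IsModulus (ω : ℝ → ℝ) : Prop :=
  ω 0 = 0 ∧ ContinuousOn ω (Set.Ici 0) ∧ MonotoneOn ω (Set.Ici 0) ∧
    ∀ s t : ℝ, 0 ≤ s → 0 ≤ t → ω (s + t) ≤ ω s + ω t

/-- The class `H^ω([a,b], E)`. -/
def HHolder {E : Type*} [NormedAddCommGroup E] (ω : ℝ → ℝ) (a b : ℝ) (f : ℝ → E) : Prop :=
  ∀ s ∈ Set.Icc a b, ∀ t ∈ Set.Icc a b, ‖f t - f s‖ ≤ ω |t - s|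


/-- Admissible knots `t₁, …, t_n`: `a ≤ t₁ − h`, `tᵢ + h < t_{i+1} − h`, `t_n + h ≤ b`. -/
def AdmKnots (a b h : ℝ) (n : ℕ) (t : ℕ → ℝ) : Prop :=
  a ≤ t 1 - h ∧ (∀ i, 1 ≤ i → i < n → t i + h < t (i + 1) - h) ∧ t n + h ≤ b

/-- The information operator: mean values of `f` over the intervals `[tᵢ − h, tᵢ + h]`. -/
noncomputable def meanInfo {E : Type*} [NormedAddCommGroup E] [NormedSpace ℝ E]
    (h : ℝ) (n : ℕ) (t : ℕ → ℝ) (f : ℝ → E) : Fin n → E :=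
  fun i => (1 / (2 * h)) • ∫ u in (t ((i : ℕ) + 1) - h)..(t ((i : ℕ) + 1) + h), f u

/-- The uniform knots `t*_k = a + (2k − 1)(b − a)/(2n)`, `k = 1, …, n`. -/
noncomputable def uniformKnots (a b : ℝ) (n : ℕ) : ℕ → ℝ :=
  fun k => a + (2 * (k : ℝ) - 1) * (b - a) / (2 * (n : ℝ))

section Helpers
variable {ω : ℝ → ℝ} (hω : IsModulus ω)

lemma omega_nonneg (hω : IsModulus ω) {s : ℝ} (hs : 0 ≤ s) : 0 ≤ ω s := by
  have := hω.2.2.1 (le_refl (0:ℝ)) hs hs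
  rw [hω.1] at this; exact this

lemma omega_mono (hω : IsModulus ω) {s t : ℝ} (hs : 0 ≤ s) (hst : s ≤ t) : ω s ≤ ω t :=
  hω.2.2.1 hs (hs.trans hst) hst

lemma omega_diff (hω : IsModulus ω) {x y : ℝ} (hy : 0 ≤ y) (hxy : y ≤ x) :
    ω x - ω y ≤ ω (x - y) := by
  have h := hω.2.2.2 (x - y) y (by linarith) hy
  rw [sub_add_cancel] at h; linarith

lemma omega_abs_diff (hω : IsModulus ω) {x y : ℝ} (hy : 0 ≤ y) (hx : 0 ≤ x) :
    |ω x - ω y| ≤ ω |x - y| := by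
  rcases le_total y x with hxy | hxy
  · rw [abs_of_nonneg (by linarith : (0:ℝ) ≤ x - y),
      abs_of_nonneg (sub_nonneg.2 (omega_mono hω hy hxy))]
    exact omega_diff hω hy hxy
  · rw [abs_of_nonpos (by linarith : x - y ≤ 0),
      abs_of_nonpos (sub_nonpos.2 (omega_mono hω hx hxy)), neg_sub, neg_sub]
    exact omega_diff hω hx hxy

lemma omega_scale (hω : IsModulus ω) (hconc : ConcaveOn ℝ (Set.Ici 0) ω)
    {l x : ℝ} (hl0 : 0 ≤ l) (hl1 : l ≤ 1) (hx : 0 ≤ x) : l * ω x ≤ ω (l * x) := by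
  have h := hconc.2 (mem_Ici.2 hx) (mem_Ici.2 (le_refl (0:ℝ))) hl0 (by linarith : (0:ℝ) ≤ 1 - l) (by ring)
  simp only [smul_eq_mul, hω.1, mul_zero, add_zero] at h
  exact h

/-- Jensen for two points with `ω 0 = 0` not needed; direct concavity. -/
lemma omega_jensen (hconc : ConcaveOn ℝ (Set.Ici 0) ω)
    {l x y : ℝ} (hl0 : 0 ≤ l) (hl1 : l ≤ 1) (hx : 0 ≤ x) (hy : 0 ≤ y) :
    l * ω x + (1 - l) * ω y ≤ ω (l * x + (1 - l) * y) :=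
  hconc.2 (mem_Ici.2 hx) (mem_Ici.2 hy) hl0 (by linarith) (by ring)

/-- continuity from a modulus bound. -/
lemma continuousOn_of_modulus {X : Type*} [PseudoMetricSpace X] (hω : IsModulus ω)
    {f : ℝ → X} {s : Set ℝ}
    (hf : ∀ x ∈ s, ∀ y ∈ s, dist (f x) (f y) ≤ ω |x - y|) : ContinuousOn f s := by
  intro x hx
  rw [Metric.continuousWithinAt_iff]
  intro ε hε
  have h0 : ContinuousWithinAt ω (Set.Ici 0) 0 := hω.2.1 0 (mem_Ici.2 le_rfl)
  rw [Metric.continuousWithinAt_iff] at h0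
  obtain ⟨δ, hδ, hδ'⟩ := h0 ε hε
  refine ⟨δ, hδ, fun {y} hy hxy => ?_⟩
  have h1 : |y - x| ∈ Set.Ici (0:ℝ) := mem_Ici.2 (abs_nonneg _)
  have h2 : dist |y - x| 0 < δ := by
    rw [Real.dist_eq, sub_zero, abs_abs]; exact hxy
  have h3 := hδ' h1 h2
  rw [Real.dist_eq, hω.1, sub_zero] at h3
  calc dist (f y) (f x) ≤ ω (|y - x|) := hf y hy x hx
    _ ≤ |ω (|y - x|)| := le_abs_self _
    _ < ε := h3

end Helpers

section Profile
variable {ω : ℝ → ℝ} {h D : ℝ}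

/-- The profile of the extremal function. -/
noncomputable def Fex (ω : ℝ → ℝ) (h D : ℝ) (r : ℝ) : ℝ :=
  if r ≤ h then
    (h / D ^ 2) * (∫ s in (0:ℝ)..D, ω s) - (h / D) * ω (D * (h - r) / h)
  else
    (h / D ^ 2) * (∫ s in (0:ℝ)..D, ω s) + (1 - h / D) * ω (D * (min r D - h) / (D - h))

lemma Fex_mono (hω : IsModulus ω) (hh : 0 < h) (hD : h < D) :
    ∀ r r', 0 ≤ r → r ≤ r' → Fex ω h D r ≤ Fex ω h D r' := by
  intro r r' hr hrr
  have hD0 : 0 < D := hh.trans hD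
  have hDh : 0 < D - h := by linarith
  have hβ0 : 0 ≤ h / D := by positivity
  have hβ1 : h / D ≤ 1 := by rw [div_le_one hD0]; linarith
  unfold Fex
  split_ifs with h1 h2 h2
  · have harg : 0 ≤ D * (h - r') / h := div_nonneg (by nlinarith) hh.le
    have : ω (D * (h - r') / h) ≤ ω (D * (h - r) / h) := by
      apply omega_mono hω harg
      apply div_le_div_of_nonneg_right _ hh.le
      nlinarith
    nlinarith [div_pos hh hD0]
  · have h3 : 0 ≤ ω (D * (h - r) / h) := omega_nonneg hω (div_nonneg (by nlinarith) hh.le)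
    have hm : h ≤ min r' D := le_min (by linarith) hD.le
    have h4 : 0 ≤ ω (D * (min r' D - h) / (D - h)) :=
      omega_nonneg hω (div_nonneg (by nlinarith) hDh.le)
    nlinarith
  · linarith
  · have hm : h ≤ min r D := le_min (by linarith) hD.le
    have hmm : min r D ≤ min r' D := min_le_min hrr le_rfl
    have : ω (D * (min r D - h) / (D - h)) ≤ ω (D * (min r' D - h) / (D - h)) := by
      apply omega_mono hω (div_nonneg (by nlinarith) hDh.le)
      apply div_le_div_of_nonneg_right _ hDh.le
      nlinarith
    nlinarith

lemma Fex_modulus (hω : IsModulus ω) (hconc : ConcaveOn ℝ (Set.Ici 0) ω)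
    (hh : 0 < h) (hD : h < D) :
    ∀ r r', 0 ≤ r → r ≤ r' → Fex ω h D r' - Fex ω h D r ≤ ω (r' - r) := by
  intro r r' hr hrr
  have hD0 : 0 < D := hh.trans hD
  have hDh : 0 < D - h := by linarith
  have hβ0 : 0 ≤ h / D := by positivity
  have hβ1 : h / D ≤ 1 := by rw [div_le_one hD0]; linarith
  unfold Fex
  split_ifs with h1 h2 h2
  · -- both ≤ h
    have hX' : 0 ≤ D * (h - r') / h := div_nonneg (by nlinarith) hh.le
    have hle : D * (h - r') / h ≤ D * (h - r) / h := by
      apply div_le_div_of_nonneg_right _ hh.le; nlinarith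
    have hdiff := omega_diff hω hX' hle
    have harg : D * (h - r) / h - D * (h - r') / h = D * (r' - r) / h := by ring
    rw [harg] at hdiff
    have hargnn : (0:ℝ) ≤ D * (r' - r) / h := div_nonneg (by nlinarith) hh.le
    have hscale := omega_scale hω hconc hβ0 hβ1 hargnn
    have harg2 : h / D * (D * (r' - r) / h) = r' - r := by
      field_simp <;> ring
    rw [harg2] at hscale
    nlinarith
  · -- r' ≤ h < r : impossible
    linarith
  · -- r ≤ h < r'
    have hmin : h ≤ min r' D := le_min (by linarith) hD.le
    have hX : 0 ≤ D * (h - r) / h := div_nonneg (by nlinarith) hh.le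
    have hY : 0 ≤ D * (min r' D - h) / (D - h) := div_nonneg (by nlinarith) hDh.le
    have hjen := omega_jensen hconc (l := 1 - h / D) (by linarith) (by linarith) hY hX
    have h1l : 1 - (1 - h / D) = h / D := by ring
    rw [h1l] at hjen
    have harg : (1 - h / D) * (D * (min r' D - h) / (D - h)) +
        h / D * (D * (h - r) / h) = min r' D - r := by
      field_simp <;> ring
    rw [harg] at hjen
    have hmle : ω (min r' D - r) ≤ ω (r' - r) := by
      apply omega_mono hω (by linarith)
      have : min r' D ≤ r' := min_le_left _ _
      linarith
    linarith
  · -- both > h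
    have hminr : h ≤ min r D := le_min (by linarith) hD.le
    have hmm : min r D ≤ min r' D := min_le_min hrr le_rfl
    have hX : 0 ≤ D * (min r D - h) / (D - h) := div_nonneg (by nlinarith) hDh.le
    have hXY : D * (min r D - h) / (D - h) ≤ D * (min r' D - h) / (D - h) := by
      apply div_le_div_of_nonneg_right _ hDh.le; nlinarith
    have hdiff := omega_diff hω hX hXY
    have hsub : D * (min r' D - h) / (D - h) - D * (min r D - h) / (D - h)
        = D * (min r' D - min r D) / (D - h) := by ring
    rw [hsub] at hdiff
    have h5 : min r' D - min r D ≤ r' - r := by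
      rcases le_total r' D with hc | hc
      · rw [min_eq_left hc, min_eq_left (hrr.trans hc)]
      · rw [min_eq_right hc]
        rcases le_total r D with hc2 | hc2
        · rw [min_eq_left hc2]; linarith
        · rw [min_eq_right hc2]; linarith
    have hmon : ω (D * (min r' D - min r D) / (D - h)) ≤ ω (D * (r' - r) / (D - h)) := by
      apply omega_mono hω (div_nonneg (by nlinarith) hDh.le)
      apply div_le_div_of_nonneg_right _ hDh.le; nlinarith
    have hscale := omega_scale hω hconc (l := (D - h) / D) (by positivity)
      (by rw [div_le_one hD0]; linarith) (div_nonneg (by nlinarith) hDh.le :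
        (0:ℝ) ≤ D * (r' - r) / (D - h))
    have harg2 : (D - h) / D * (D * (r' - r) / (D - h)) = r' - r := by
      field_simp <;> ring
    rw [harg2] at hscale
    have h6 : (0:ℝ) ≤ 1 - h / D := by linarith
    have k1 := mul_le_mul_of_nonneg_left (hdiff.trans hmon) h6
    rw [mul_sub] at k1
    have k2 : (1 - h / D) * ω (D * (r' - r) / (D - h)) ≤ ω (r' - r) := by
      have h7 : 1 - h / D = (D - h) / D := by field_simp
      rw [h7]; exact hscale
    linarith

lemma Fex_abs_modulus (hω : IsModulus ω) (hconc : ConcaveOn ℝ (Set.Ici 0) ω)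
    (hh : 0 < h) (hD : h < D) {r r' : ℝ} (hr : 0 ≤ r) (hr' : 0 ≤ r') :
    |Fex ω h D r' - Fex ω h D r| ≤ ω (|r' - r|) := by
  rcases le_total r r' with hc | hc
  · rw [abs_of_nonneg (sub_nonneg.2 (Fex_mono hω hh hD r r' hr hc)),
      abs_of_nonneg (by linarith)]
    exact Fex_modulus hω hconc hh hD r r' hr hc
  · rw [abs_of_nonpos (sub_nonpos.2 (Fex_mono hω hh hD r' r hr' hc)),
      abs_of_nonpos (by linarith), neg_sub, neg_sub]
    exact Fex_modulus hω hconc hh hD r' r hr' hc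

lemma Fex_const_after (hh : 0 < h) (hD : h < D) {r : ℝ} (hr : D ≤ r) :
    Fex ω h D r = Fex ω h D D := by
  unfold Fex
  rw [if_neg (by linarith), if_neg (by linarith), min_eq_right hr, min_self]

end Profile

section ProfileIntegrals
variable {ω : ℝ → ℝ} {h D : ℝ}

lemma intervalIntegrable_omega_affine (hω : IsModulus ω) {c d p q : ℝ}
    (hmaps : ∀ r ∈ Set.uIcc p q, 0 ≤ c * r + d) :
    IntervalIntegrable (fun r => ω (c * r + d)) MeasureTheory.volume p q := by
  apply ContinuousOn.intervalIntegrable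
  exact hω.2.1.comp (Continuous.continuousOn (by continuity)) (fun r hr => hmaps r hr)

lemma Fex_contOn (hω : IsModulus ω) (hconc : ConcaveOn ℝ (Set.Ici 0) ω)
    (hh : 0 < h) (hD : h < D) : ContinuousOn (Fex ω h D) (Set.Ici 0) :=
  continuousOn_of_modulus hω (fun x hx y hy => by
    rw [Real.dist_eq]; exact Fex_abs_modulus hω hconc hh hD hy hx)

lemma Fex_integrable (hω : IsModulus ω) (hconc : ConcaveOn ℝ (Set.Ici 0) ω)
    (hh : 0 < h) (hD : h < D) {p q : ℝ} (hp : 0 ≤ p) (hq : 0 ≤ q) :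
    IntervalIntegrable (Fex ω h D) MeasureTheory.volume p q := by
  apply ContinuousOn.intervalIntegrable
  apply (Fex_contOn hω hconc hh hD).mono
  intro r hr
  rcases Set.mem_uIcc.mp hr with ⟨h1, _⟩ | ⟨h1, _⟩ <;> exact le_trans (by linarith) h1

lemma Fex_integral_dip (hω : IsModulus ω) (hh : 0 < h) (hD : h < D) :
    ∫ r in (0:ℝ)..h, Fex ω h D r = 0 := by
  have hD0 : 0 < D := hh.trans hD
  have hcong : Set.EqOn (Fex ω h D)
      (fun r => (h / D ^ 2) * (∫ s in (0:ℝ)..D, ω s) - (h / D) * ω (-(D/h) * r + D))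
      (Set.uIcc 0 h) := by
    intro r hr
    rw [Set.uIcc_of_le hh.le] at hr
    unfold Fex
    rw [if_pos hr.2]
    have : D * (h - r) / h = -(D/h) * r + D := by field_simp; ring
    rw [this]
  rw [intervalIntegral.integral_congr hcong]
  have hc : -(D/h) ≠ 0 := by
    have : 0 < D / h := div_pos hD0 hh
    intro hcc; rw [neg_eq_zero] at hcc; linarith
  have hint : IntervalIntegrable (fun r => ω (-(D/h) * r + D)) MeasureTheory.volume 0 h := by
    apply intervalIntegrable_omega_affine hω
    intro r hr
    rw [Set.uIcc_of_le hh.le] at hr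
    have h1 : -(D/h) * r + D = D * (h - r) / h := by field_simp; ring
    rw [h1]
    exact div_nonneg (by nlinarith [hr.1, hr.2]) hh.le
  rw [intervalIntegral.integral_sub (intervalIntegrable_const) (hint.const_mul _),
    intervalIntegral.integral_const, intervalIntegral.integral_const_mul]
  have hcomp := intervalIntegral.integral_comp_mul_add ω hc D (a := 0) (b := h)
  have e1 : -(D/h) * 0 + D = D := by ring
  have e2 : -(D/h) * h + D = 0 := by field_simp; ring
  rw [e1, e2] at hcomp
  rw [hcomp, intervalIntegral.integral_symm]
  have e3 : (-(D/h))⁻¹ = -(h/D) := by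
    rw [← one_div, one_div_neg_eq_neg_one_div]
    congr 1
    rw [one_div_div]
  rw [e3]
  simp only [smul_eq_mul, sub_zero]
  field_simp
  ring

lemma Fex_integral_half (hω : IsModulus ω) (hconc : ConcaveOn ℝ (Set.Ici 0) ω)
    (hh : 0 < h) (hD : h < D) :
    ∫ r in (0:ℝ)..D, Fex ω h D r = (1 - h / D) * ∫ s in (0:ℝ)..D, ω s := by
  have hD0 : 0 < D := hh.trans hD
  have hDh : 0 < D - h := by linarith
  have hsplit : (∫ r in (0:ℝ)..h, Fex ω h D r) + (∫ r in h..D, Fex ω h D r)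
      = ∫ r in (0:ℝ)..D, Fex ω h D r :=
    intervalIntegral.integral_add_adjacent_intervals
      (Fex_integrable hω hconc hh hD le_rfl hh.le)
      (Fex_integrable hω hconc hh hD hh.le hD0.le)
  have hcong : Set.EqOn (Fex ω h D)
      (fun r => (h / D ^ 2) * (∫ s in (0:ℝ)..D, ω s)
        + (1 - h / D) * ω ((D/(D-h)) * r + -(h*D/(D-h))))
      (Set.uIcc h D) := by
    intro r hr
    rw [Set.uIcc_of_le hD.le] at hr
    show Fex ω h D r = (h / D ^ 2) * (∫ s in (0:ℝ)..D, ω s)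
        + (1 - h / D) * ω ((D/(D-h)) * r + -(h*D/(D-h)))
    rcases le_or_gt r h with hrh | hrh
    · have hr_eq : r = h := le_antisymm hrh hr.1
      rw [hr_eq]
      unfold Fex
      rw [if_pos le_rfl]
      have e1 : D * (h - h) / h = 0 := by ring
      have e2 : (D/(D-h)) * h + -(h*D/(D-h)) = 0 := by ring
      rw [e1, e2, hω.1]
      ring
    · unfold Fex
      rw [if_neg (not_le.2 hrh), min_eq_left hr.2]
      have e1 : D * (r - h) / (D - h) = (D/(D-h)) * r + -(h*D/(D-h)) := by
        field_simp; ring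
      rw [e1]
  have hc : D/(D-h) ≠ 0 := by positivity
  have hint : IntervalIntegrable (fun r => ω ((D/(D-h)) * r + -(h*D/(D-h))))
      MeasureTheory.volume h D := by
    apply intervalIntegrable_omega_affine hω
    intro r hr
    rw [Set.uIcc_of_le hD.le] at hr
    have e1 : (D/(D-h)) * r + -(h*D/(D-h)) = D * (r - h) / (D - h) := by field_simp; ring
    rw [e1]
    exact div_nonneg (by nlinarith [hr.1]) hDh.le
  have hmid : (∫ r in h..D, Fex ω h D r)
      = (D - h) * ((h / D ^ 2) * (∫ s in (0:ℝ)..D, ω s))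
        + (1 - h/D) * ((D-h)/D * ∫ s in (0:ℝ)..D, ω s) := by
    rw [intervalIntegral.integral_congr hcong,
      intervalIntegral.integral_add (intervalIntegrable_const) (hint.const_mul _),
      intervalIntegral.integral_const, intervalIntegral.integral_const_mul]
    have hcomp := intervalIntegral.integral_comp_mul_add ω hc (-(h*D/(D-h))) (a := h) (b := D)
    have e1 : D/(D-h) * h + -(h*D/(D-h)) = 0 := by ring
    have e2 : D/(D-h) * D + -(h*D/(D-h)) = D := by field_simp; ring
    rw [e1, e2] at hcomp
    rw [hcomp]
    have e3 : (D/(D-h))⁻¹ = (D-h)/D := by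
      rw [← one_div, one_div_div]
    rw [e3]
    simp only [smul_eq_mul]
  rw [← hsplit, Fex_integral_dip hω hh hD, hmid]
  field_simp
  ring

lemma Fex_tangent (hω : IsModulus ω) (hconc : ConcaveOn ℝ (Set.Ici 0) ω)
    (hh : 0 < h) (hD : h < D) {x : ℝ} (hx : 0 ≤ x) :
    (∫ r in (0:ℝ)..D, Fex ω h D r) + (x - D) * Fex ω h D D ≤ ∫ r in (0:ℝ)..x, Fex ω h D r := by
  have hD0 : 0 < D := hh.trans hD
  rcases le_total D x with hc | hc
  · have hsplit : (∫ r in (0:ℝ)..D, Fex ω h D r) + (∫ r in D..x, Fex ω h D r)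
        = ∫ r in (0:ℝ)..x, Fex ω h D r :=
      intervalIntegral.integral_add_adjacent_intervals
        (Fex_integrable hω hconc hh hD le_rfl hD0.le)
        (Fex_integrable hω hconc hh hD hD0.le hx)
    have hconst : (∫ r in D..x, Fex ω h D r) = (x - D) * Fex ω h D D := by
      have hcong : Set.EqOn (Fex ω h D) (fun _ => Fex ω h D D) (Set.uIcc D x) := by
        intro r hr
        rw [Set.uIcc_of_le hc] at hr
        exact Fex_const_after hh hD hr.1
      rw [intervalIntegral.integral_congr hcong, intervalIntegral.integral_const,
        smul_eq_mul]
    rw [← hsplit, hconst]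
  · have hsplit : (∫ r in (0:ℝ)..x, Fex ω h D r) + (∫ r in x..D, Fex ω h D r)
        = ∫ r in (0:ℝ)..D, Fex ω h D r :=
      intervalIntegral.integral_add_adjacent_intervals
        (Fex_integrable hω hconc hh hD le_rfl hx)
        (Fex_integrable hω hconc hh hD hx hD0.le)
    have hmono : (∫ r in x..D, Fex ω h D r) ≤ (D - x) * Fex ω h D D := by
      have := intervalIntegral.integral_mono_on hc
        (Fex_integrable hω hconc hh hD hx hD0.le) (intervalIntegrable_const)
        (fun r hr => Fex_mono hω hh hD r D (le_trans hx hr.1) hr.2)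
      rwa [intervalIntegral.integral_const, smul_eq_mul] at this
    linarith

end ProfileIntegrals

section Holder
variable {E : Type*} [NormedAddCommGroup E] [NormedSpace ℝ E]
variable {ω : ℝ → ℝ} {a b : ℝ} {f : ℝ → E}

lemma hholder_contOn (hω : IsModulus ω) (hf : HHolder ω a b f) :
    ContinuousOn f (Set.Icc a b) :=
  continuousOn_of_modulus hω (fun x hx y hy => by
    rw [dist_eq_norm]; exact hf y hy x hx)

lemma hholder_integrable (hω : IsModulus ω) (hf : HHolder ω a b f)
    {p q : ℝ} (hp : p ∈ Set.Icc a b) (hq : q ∈ Set.Icc a b) :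
    IntervalIntegrable f MeasureTheory.volume p q :=
  ((hholder_contOn hω hf).mono (Set.uIcc_subset_Icc hp hq)).intervalIntegrable

lemma half_right [CompleteSpace E] (hω : IsModulus ω) {h D : ℝ} (hh : 0 < h) (hD : h < D)
    (hf : HHolder ω a b f) {t : ℝ} (hta : a ≤ t) (htb : t + D ≤ b) :
    ‖(∫ u in t..(t+D), f u) - (D/h) • ∫ u in t..(t+h), f u‖
      ≤ (1 - h/D) * ∫ s in (0:ℝ)..D, ω s := by
  have hD0 : 0 < D := hh.trans hD
  have hs : (0:ℝ) < D - h := by linarith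
  set s := D - h with hsdef
  set c : ℝ := -(h/s) with hcdef
  set d : ℝ := (t+h)*D/s with hddef
  clear_value s c d
  have hne1 : h ≠ 0 := ne_of_gt hh
  have hne2 : D ≠ 0 := ne_of_gt hD0
  have hsne : s ≠ 0 := ne_of_gt hs
  have hne3 : D - h ≠ 0 := by rw [← hsdef]; exact hsne
  have hc : c ≠ 0 := by
    have hpos : 0 < h / s := div_pos hh hs
    rw [hcdef, neg_ne_zero]
    exact ne_of_gt hpos
  have hmemIcc : ∀ u, t ≤ u → u ≤ t + D → u ∈ Set.Icc a b :=
    fun u h1 h2 => ⟨hta.trans h1, by linarith⟩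
  have hTmem : ∀ u, t + h ≤ u → u ≤ t + D → t ≤ c*u+d ∧ c*u+d ≤ t+h := by
    intro u h1 h2
    have e1 : c*u+d - t = h*(t+D-u)/s := by
      rw [hcdef, hddef, hsdef]; field_simp; try ring
    have e2 : (t+h) - (c*u+d) = h*(u-(t+h))/s := by
      rw [hcdef, hddef, hsdef]; field_simp; try ring
    have p1 : 0 ≤ h*(t+D-u)/s := div_nonneg (by nlinarith) hs.le
    have p2 : 0 ≤ h*(u-(t+h))/s := div_nonneg (by nlinarith) hs.le
    constructor <;> linarith
  have hcont : ContinuousOn f (Set.Icc a b) := hholder_contOn hω hf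
  have If1 : IntervalIntegrable f MeasureTheory.volume t (t+h) :=
    hholder_integrable hω hf (hmemIcc t le_rfl (by linarith)) (hmemIcc (t+h) (by linarith) (by linarith))
  have If2 : IntervalIntegrable f MeasureTheory.volume (t+h) (t+D) :=
    hholder_integrable hω hf (hmemIcc (t+h) (by linarith) (by linarith)) (hmemIcc (t+D) (by linarith) le_rfl)
  have IfT : IntervalIntegrable (fun u => f (c*u+d)) MeasureTheory.volume (t+h) (t+D) := by
    apply ContinuousOn.intervalIntegrable
    apply hcont.comp (Continuous.continuousOn (by continuity))
    intro u hu
    rw [Set.uIcc_of_le (by linarith : t+h ≤ t+D)] at hu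
    have hm := hTmem u hu.1 hu.2
    show c*u+d ∈ Set.Icc a b
    exact ⟨by linarith [hm.1], by linarith [hm.2]⟩
  -- the substitution identity
  have hcomp := intervalIntegral.integral_comp_mul_add f hc d (a := t+h) (b := t+D)
  have e1 : c*(t+h)+d = t+h := by
    rw [hcdef, hddef, hsdef]; field_simp; try ring
  have e2 : c*(t+D)+d = t := by
    rw [hcdef, hddef, hsdef]; field_simp; try ring
  rw [e1, e2] at hcomp
  have hcinv : c⁻¹ = -(s/h) := by
    rw [hcdef, ← one_div, one_div_neg_eq_neg_one_div, one_div_div]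
  have hA : (∫ u in (t+h)..(t+D), f (c*u+d)) = (s/h) • ∫ u in t..(t+h), f u := by
    rw [hcomp, hcinv, intervalIntegral.integral_symm, neg_smul, smul_neg, neg_neg]
  -- the key identity
  have key : (∫ u in t..(t+D), f u) - (D/h) • ∫ u in t..(t+h), f u
      = ∫ u in (t+h)..(t+D), (f u - f (c*u+d)) := by
    rw [intervalIntegral.integral_sub If2 IfT, hA,
      ← intervalIntegral.integral_add_adjacent_intervals If1 If2]
    have hDh : D/h = 1 + s/h := by rw [hsdef]; field_simp; ring
    rw [hDh, add_smul, one_smul]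
    abel
  rw [key]
  -- bound the integrand
  have hbound : ∀ u ∈ Set.uIoc (t+h) (t+D), ‖f u - f (c*u+d)‖ ≤ ω ((D/s) * u + -((D/s)*(t+h))) := by
    intro u hu
    rw [Set.uIoc_of_le (by linarith : t+h ≤ t+D)] at hu
    have h1 : t + h ≤ u := hu.1.le
    have h2 : u ≤ t + D := hu.2
    have hT := hTmem u h1 h2
    have hfb := hf (c*u+d) ⟨by linarith [hT.1], by linarith [hT.2]⟩ u (hmemIcc u (by linarith) h2)
    have harg : |u - (c*u+d)| = (D/s) * u + -((D/s)*(t+h)) := by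
      rw [abs_of_nonneg]
      · rw [hcdef, hddef, hsdef]; field_simp; try ring
      · have := hT.2; linarith [hT.2, h1]
    rwa [harg] at hfb
  have hgint : IntervalIntegrable (fun u => ω ((D/s) * u + -((D/s)*(t+h))))
      MeasureTheory.volume (t+h) (t+D) := by
    apply intervalIntegrable_omega_affine hω
    intro u hu
    rw [Set.uIcc_of_le (by linarith : t+h ≤ t+D)] at hu
    have : (D/s) * u + -((D/s)*(t+h)) = (D/s) * (u - (t+h)) := by ring
    rw [this]
    have : 0 ≤ u - (t+h) := by linarith [hu.1]
    positivity
  have hW : 0 ≤ ∫ x in (0:ℝ)..D, ω x :=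
    intervalIntegral.integral_nonneg hD0.le (fun u hu => omega_nonneg hω hu.1)
  have hgval : (∫ u in (t+h)..(t+D), ω ((D/s) * u + -((D/s)*(t+h)))) = (s/D) * ∫ x in (0:ℝ)..D, ω x := by
    have hc2 : (D/s) ≠ 0 := by positivity
    have hcomp2 := intervalIntegral.integral_comp_mul_add ω hc2 (-((D/s)*(t+h))) (a := t+h) (b := t+D)
    have e3 : D/s*(t+h) + -(D/s*(t+h)) = 0 := by ring
    have e4 : D/s*(t+D) + -(D/s*(t+h)) = D := by rw [hsdef]; field_simp; try ring
    rw [e3, e4] at hcomp2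
    rw [hcomp2]
    have e5 : (D/s)⁻¹ = s/D := by rw [← one_div, one_div_div]
    rw [e5, smul_eq_mul]
  calc ‖∫ u in (t+h)..(t+D), (f u - f (c*u+d))‖
      ≤ |∫ u in (t+h)..(t+D), ω ((D/s) * u + -((D/s)*(t+h)))| := by
        apply intervalIntegral.norm_integral_le_abs_of_norm_le _ hgint
        exact (MeasureTheory.ae_restrict_iff' measurableSet_uIoc).2
          (Filter.Eventually.of_forall hbound)
    _ = (s/D) * ∫ x in (0:ℝ)..D, ω x := by
        rw [hgval, abs_of_nonneg (by positivity)]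
    _ = (1 - h/D) * ∫ x in (0:ℝ)..D, ω x := by
        rw [hsdef]; field_simp
end Holder

section Holder2
variable {E : Type*} [NormedAddCommGroup E] [NormedSpace ℝ E]
variable {ω : ℝ → ℝ} {a b : ℝ} {f : ℝ → E}

lemma half_left [CompleteSpace E] (hω : IsModulus ω) {h D : ℝ} (hh : 0 < h) (hD : h < D)
    (hf : HHolder ω a b f) {t : ℝ} (hta : a ≤ t - D) (htb : t ≤ b) :
    ‖(∫ u in (t-D)..t, f u) - (D/h) • ∫ u in (t-h)..t, f u‖
      ≤ (1 - h/D) * ∫ s in (0:ℝ)..D, ω s := by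
  have hg : HHolder ω (2*t-b) (2*t-a) (fun x => f (2*t - x)) := by
    intro s hs u hu
    have h1 : 2*t - s ∈ Set.Icc a b := ⟨by linarith [hs.2], by linarith [hs.1]⟩
    have h2 : 2*t - u ∈ Set.Icc a b := ⟨by linarith [hu.2], by linarith [hu.1]⟩
    have := hf (2*t-s) h1 (2*t-u) h2
    have e : |2*t-u - (2*t-s)| = |u - s| := by
      rw [show 2*t-u - (2*t-s) = -(u-s) by ring, abs_neg]
    rwa [e] at this
  have hmain := half_right hω hh hD hg (t := t)
    (by linarith : 2*t-b ≤ t) (by linarith : t + D ≤ 2*t-a)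
  have k1 := intervalIntegral.integral_comp_sub_left f (2*t) (a := t) (b := t+D)
  have k2 := intervalIntegral.integral_comp_sub_left f (2*t) (a := t) (b := t+h)
  rw [show 2*t-(t+D) = t-D by ring, show 2*t-t = t by ring] at k1
  rw [show 2*t-(t+h) = t-h by ring, show 2*t-t = t by ring] at k2
  rwa [k1, k2] at hmain

end Holder2

section Upper
variable {E : Type*} [NormedAddCommGroup E] [NormedSpace ℝ E]
variable {ω : ℝ → ℝ} {a b h : ℝ} {n : ℕ}

lemma upper_bound_aux [CompleteSpace E] (hω : IsModulus ω)
    (hab : a < b) (hn : 0 < n) (hh : 0 < h) (hnh : 2*(n:ℝ)*h < b - a)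
    (f : ℝ → E) (hf : HHolder ω a b f) :
    ‖(∫ u in a..b, f u) - ((b-a)/(n:ℝ)) • ∑ i : Fin n, meanInfo h n (uniformKnots a b n) f i‖
      ≤ 2*(n:ℝ)*(1 - h/((b-a)/(2*(n:ℝ)))) * ∫ s in (0:ℝ)..((b-a)/(2*(n:ℝ))), ω s := by
  have hn' : (0:ℝ) < n := Nat.cast_pos.2 hn
  have hba : 0 < b - a := by linarith
  set D : ℝ := (b-a)/(2*(n:ℝ)) with hDdef
  have hD0 : 0 < D := by rw [hDdef]; positivity
  have hhD : h < D := by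
    rw [hDdef, lt_div_iff₀ (by positivity)]; nlinarith
  have h2nD : a + 2*(n:ℝ)*D = b := by rw [hDdef]; field_simp; ring
  have tk : ∀ k : ℕ, uniformKnots a b n k = a + (2*(k:ℝ)-1)*D := by
    intro k; unfold uniformKnots; rw [hDdef, mul_div_assoc]
  have hckmem : ∀ k : ℕ, k < n → a ≤ a + 2*(k:ℝ)*D ∧ a + (2*(k:ℝ)+2)*D ≤ b := by
    intro k hk
    have hkn : (k:ℝ) + 1 ≤ (n:ℝ) := by exact_mod_cast Nat.succ_le_of_lt hk
    have hk0 : (0:ℝ) ≤ (k:ℝ) := Nat.cast_nonneg k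
    constructor
    · nlinarith
    · nlinarith
  have hWnn : (0:ℝ) ≤ ∫ s in (0:ℝ)..D, ω s :=
    intervalIntegral.integral_nonneg hD0.le (fun u hu => omega_nonneg hω hu.1)
  -- decompose the integral over periods
  have hint : ∀ k < n, IntervalIntegrable f MeasureTheory.volume
      (a + 2*(k:ℝ)*D) (a + 2*((k:ℕ)+1:ℕ)*D) := by
    intro k hk
    obtain ⟨h1, h2⟩ := hckmem k hk
    have e : (((k:ℕ)+1:ℕ) : ℝ) = (k:ℝ) + 1 := by push_cast; try ring
    apply hholder_integrable hω hf
    · exact ⟨h1, by nlinarith⟩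
    · rw [e]
      exact ⟨by nlinarith, by nlinarith⟩
  have hsum := intervalIntegral.sum_integral_adjacent_intervals
    (a := fun k : ℕ => a + 2*(k:ℝ)*D) (n := n) (μ := MeasureTheory.volume) hint
  beta_reduce at hsum
  rw [show a + 2*((0:ℕ):ℝ)*D = a by norm_num, show a + 2*((n:ℕ):ℝ)*D = b from h2nD] at hsum
  -- rewrite the method term
  have hmethod : ((b-a)/(n:ℝ)) • ∑ i : Fin n, meanInfo h n (uniformKnots a b n) f i
      = ∑ k ∈ Finset.range n,
          (D/h) • ∫ u in (a + (2*(k:ℝ)+1)*D - h)..(a + (2*(k:ℝ)+1)*D + h), f u := by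
    simp only [meanInfo]
    rw [Fin.sum_univ_eq_sum_range (fun k : ℕ => (1/(2*h):ℝ) •
      ∫ u in (uniformKnots a b n (k+1) - h)..(uniformKnots a b n (k+1) + h), f u) n]
    rw [Finset.smul_sum]
    apply Finset.sum_congr rfl
    intro k _
    have hk1 : uniformKnots a b n (k+1) = a + (2*(k:ℝ)+1)*D := by
      rw [tk (k+1)]; push_cast; ring
    have hsc : (b-a)/(n:ℝ) * (1/(2*h)) = D/h := by
      rw [hDdef, div_div, div_mul_div_comm, mul_one]
      congr 1
      ring
    rw [hk1, smul_smul, hsc]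
  -- per-period bound
  have hper : ∀ k ∈ Finset.range n,
      ‖(∫ u in (a + 2*(k:ℝ)*D)..(a + 2*(((k:ℕ)+1:ℕ):ℝ)*D), f u)
        - (D/h) • ∫ u in (a + (2*(k:ℝ)+1)*D - h)..(a + (2*(k:ℝ)+1)*D + h), f u‖
      ≤ 2*(1 - h/D) * ∫ s in (0:ℝ)..D, ω s := by
    intro k hk
    rw [Finset.mem_range] at hk
    obtain ⟨hck1, hck2⟩ := hckmem k hk
    set c : ℝ := a + (2*(k:ℝ)+1)*D with hcdef
    have ePk : a + 2*(k:ℝ)*D = c - D := by rw [hcdef]; ring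
    have ePk1 : a + 2*(((k:ℕ)+1:ℕ):ℝ)*D = c + D := by rw [hcdef]; push_cast; ring
    have hacD : a ≤ c - D := by rw [hcdef]; linarith [hck1]
    have hcDb : c + D ≤ b := by rw [hcdef]; linarith [hck2]
    have hmem : ∀ x, c - D ≤ x → x ≤ c + D → x ∈ Set.Icc a b :=
      fun x h1 h2 => ⟨by linarith, by linarith⟩
    have I1 : IntervalIntegrable f MeasureTheory.volume (c-D) c :=
      hholder_integrable hω hf (hmem _ le_rfl (by linarith)) (hmem _ (by linarith) (by linarith))
    have I2 : IntervalIntegrable f MeasureTheory.volume c (c+D) :=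
      hholder_integrable hω hf (hmem _ (by linarith) (by linarith)) (hmem _ (by linarith) le_rfl)
    have I3 : IntervalIntegrable f MeasureTheory.volume (c-h) c :=
      hholder_integrable hω hf (hmem _ (by linarith) (by linarith)) (hmem _ (by linarith) (by linarith))
    have I4 : IntervalIntegrable f MeasureTheory.volume c (c+h) :=
      hholder_integrable hω hf (hmem _ (by linarith) (by linarith)) (hmem _ (by linarith) (by linarith))
    rw [ePk, ePk1, ← intervalIntegral.integral_add_adjacent_intervals I1 I2,
      ← intervalIntegral.integral_add_adjacent_intervals I3 I4, smul_add]
    have hre : (∫ u in (c-D)..c, f u) + (∫ u in c..(c+D), f u)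
        - ((D/h) • (∫ u in (c-h)..c, f u) + (D/h) • ∫ u in c..(c+h), f u)
        = ((∫ u in (c-D)..c, f u) - (D/h) • (∫ u in (c-h)..c, f u))
          + ((∫ u in c..(c+D), f u) - (D/h) • ∫ u in c..(c+h), f u) := by abel
    rw [hre]
    have hL := half_left hω hh hhD hf (t := c) hacD (by linarith)
    have hR := half_right hω hh hhD hf (t := c) (by linarith) hcDb
    calc ‖_ + _‖ ≤ _ := norm_add_le _ _
      _ ≤ (1 - h/D) * (∫ s in (0:ℝ)..D, ω s) + (1 - h/D) * (∫ s in (0:ℝ)..D, ω s) :=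
          add_le_add hL hR
      _ = 2*(1 - h/D) * ∫ s in (0:ℝ)..D, ω s := by ring
  rw [← hsum, hmethod, ← Finset.sum_sub_distrib]
  calc ‖∑ k ∈ Finset.range n, ((∫ u in (a + 2*(k:ℝ)*D)..(a + 2*(((k:ℕ)+1:ℕ):ℝ)*D), f u)
        - (D/h) • ∫ u in (a + (2*(k:ℝ)+1)*D - h)..(a + (2*(k:ℝ)+1)*D + h), f u)‖
      ≤ ∑ k ∈ Finset.range n, ‖(∫ u in (a + 2*(k:ℝ)*D)..(a + 2*(((k:ℕ)+1:ℕ):ℝ)*D), f u)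
        - (D/h) • ∫ u in (a + (2*(k:ℝ)+1)*D - h)..(a + (2*(k:ℝ)+1)*D + h), f u‖ :=
        norm_sum_le _ _
    _ ≤ ∑ _k ∈ Finset.range n, 2*(1 - h/D) * ∫ s in (0:ℝ)..D, ω s :=
        Finset.sum_le_sum hper
    _ = 2*(n:ℝ)*(1 - h/D) * ∫ s in (0:ℝ)..D, ω s := by
        rw [Finset.sum_const, Finset.card_range, nsmul_eq_mul]
        ring
end Upper

section Lower

lemma adm_gap {a b h : ℝ} {n : ℕ} {t : ℕ → ℝ} (hh : 0 < h) (adm : AdmKnots a b h n t) :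
    ∀ i j, 1 ≤ i → i < j → j ≤ n → t i + h < t j - h := by
  intro i j h1 h2 h3
  induction j with
  | zero => omega
  | succ m ih =>
    rcases Nat.lt_succ_iff_lt_or_eq.mp h2 with hlt | heq
    · have h4 := ih hlt (by omega)
      have h5 := adm.2.1 m (by omega) (by omega)
      linarith
    · rw [heq]
      exact adm.2.1 m (by omega) (by omega)

lemma adm_mono {a b h : ℝ} {n : ℕ} {t : ℕ → ℝ} (hh : 0 < h) (adm : AdmKnots a b h n t) :
    ∀ i j, 1 ≤ i → i ≤ j → j ≤ n → t i ≤ t j := by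
  intro i j h1 h2 h3
  rcases eq_or_lt_of_le h2 with heq | hlt
  · rw [heq]
  · have := adm_gap hh adm i j h1 hlt h3
    linarith

lemma extremal_exists {ω : ℝ → ℝ} {a b h : ℝ} {n : ℕ} {t : ℕ → ℝ}
    (hω : IsModulus ω) (hconc : ConcaveOn ℝ (Set.Ici 0) ω)
    (hab : a < b) (hn : 0 < n) (hh : 0 < h) (hnh : 2*(n:ℝ)*h < b - a)
    (adm : AdmKnots a b h n t) :
    ∃ φ : ℝ → ℝ, (∀ x y : ℝ, |φ x - φ y| ≤ ω |x - y|) ∧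
      (∀ i, 1 ≤ i → i ≤ n → ∫ u in (t i - h)..(t i + h), φ u = 0) ∧
      2*(n:ℝ)*(1 - h/((b-a)/(2*(n:ℝ)))) * (∫ s in (0:ℝ)..((b-a)/(2*(n:ℝ))), ω s)
        ≤ ∫ u in a..b, φ u := by
  have hn' : (0:ℝ) < n := Nat.cast_pos.2 hn
  have hba : 0 < b - a := by linarith
  set D : ℝ := (b-a)/(2*(n:ℝ)) with hDdef
  have hD0 : 0 < D := by rw [hDdef]; positivity
  have hhD : h < D := by
    rw [hDdef, lt_div_iff₀ (by positivity)]; nlinarith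
  have hba2 : b - a = 2*(n:ℝ)*D := by rw [hDdef]; field_simp
  clear_value D
  have hKne : (Finset.Icc 1 n).Nonempty := ⟨1, Finset.mem_Icc.mpr ⟨le_rfl, hn⟩⟩
  set τ : ℝ → ℝ := fun x => (Finset.Icc 1 n).inf' hKne (fun i => |x - t i|) with hτdef
  have hτle : ∀ x, ∀ i, 1 ≤ i → i ≤ n → τ x ≤ |x - t i| := by
    intro x i h1 h2
    exact Finset.inf'_le _ (Finset.mem_Icc.mpr ⟨h1, h2⟩)
  have hτge : ∀ (x : ℝ) (v : ℝ), (∀ j, 1 ≤ j → j ≤ n → v ≤ |x - t j|) → v ≤ τ x := by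
    intro x v hv
    apply Finset.le_inf'
    intro j hj
    rw [Finset.mem_Icc] at hj
    exact hv j hj.1 hj.2
  have hτnn : ∀ x, 0 ≤ τ x := fun x => hτge x 0 (fun j _ _ => abs_nonneg _)
  have hτlip : ∀ x y, |τ x - τ y| ≤ |x - y| := by
    intro x y
    rw [abs_sub_le_iff]
    constructor
    · obtain ⟨j, hj, hje⟩ := Finset.exists_mem_eq_inf' hKne (fun i => |y - t i|)
      rw [Finset.mem_Icc] at hj
      have h1 : τ x ≤ |x - t j| := hτle x j hj.1 hj.2
      have h2 : |x - t j| ≤ |x - y| + |y - t j| := by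
        have := abs_sub_le x y (t j); linarith [abs_sub_le x y (t j)]
      have h3 : τ y = |y - t j| := hje
      linarith
    · obtain ⟨j, hj, hje⟩ := Finset.exists_mem_eq_inf' hKne (fun i => |x - t i|)
      rw [Finset.mem_Icc] at hj
      have h1 : τ y ≤ |y - t j| := hτle y j hj.1 hj.2
      have h2 : |y - t j| ≤ |y - x| + |x - t j| := abs_sub_le y x (t j)
      have h3 : τ x = |x - t j| := hje
      rw [abs_sub_comm y x] at h2
      linarith
  have hφmod : ∀ x y : ℝ, |Fex ω h D (τ x) - Fex ω h D (τ y)| ≤ ω (|x - y|) := by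
    intro x y
    calc |Fex ω h D (τ x) - Fex ω h D (τ y)| ≤ ω (|τ x - τ y|) :=
          Fex_abs_modulus hω hconc hh hhD (hτnn y) (hτnn x)
      _ ≤ ω (|x - y|) := omega_mono hω (abs_nonneg _) (hτlip x y)
  have hφint : ∀ p q : ℝ, IntervalIntegrable (fun x => Fex ω h D (τ x))
      MeasureTheory.volume p q := by
    intro p q
    apply ContinuousOn.intervalIntegrable
    apply continuousOn_of_modulus hω
    intro x _ y _
    rw [Real.dist_eq]
    exact hφmod x y
  refine ⟨fun x => Fex ω h D (τ x), hφmod, ?_, ?_⟩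
  · -- zero means
    intro i hi1 hi2
    have hJt : ∀ x ∈ Set.Icc (t i - h) (t i + h), τ x = |x - t i| := by
      intro x hx
      apply le_antisymm (hτle x i hi1 hi2)
      apply hτge
      intro j hj1 hj2
      rcases lt_trichotomy j i with hji | hji | hji
      · have hgap := adm_gap hh adm j i hj1 hji hi2
        have h1 : |x - t i| ≤ h := abs_le.mpr ⟨by linarith [hx.1], by linarith [hx.2]⟩
        calc |x - t i| ≤ h := h1
          _ ≤ x - t j := by linarith [hx.1]
          _ ≤ |x - t j| := le_abs_self _
      · rw [hji]
      · have hgap := adm_gap hh adm i j hi1 hji hj2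
        have h1 : |x - t i| ≤ h := abs_le.mpr ⟨by linarith [hx.1], by linarith [hx.2]⟩
        calc |x - t i| ≤ h := h1
          _ ≤ t j - x := by linarith [hx.2]
          _ ≤ |x - t j| := by rw [abs_sub_comm]; exact le_abs_self _
    have hL : ∫ u in (t i - h)..(t i), Fex ω h D (τ u) = 0 := by
      have hEq : Set.EqOn (fun x => Fex ω h D (τ x)) (fun x => Fex ω h D (t i - x))
          (Set.uIcc (t i - h) (t i)) := by
        intro x hx
        rw [Set.uIcc_of_le (by linarith)] at hx
        show Fex ω h D (τ x) = Fex ω h D (t i - x)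
        rw [hJt x ⟨hx.1, by linarith [hx.2]⟩]
        congr 1
        rw [abs_of_nonpos (by linarith [hx.2]), neg_sub]
      rw [intervalIntegral.integral_congr hEq,
        intervalIntegral.integral_comp_sub_left (Fex ω h D) (t i),
        sub_self, show t i - (t i - h) = h by ring]
      exact Fex_integral_dip hω hh hhD
    have hR : ∫ u in (t i)..(t i + h), Fex ω h D (τ u) = 0 := by
      have hEq : Set.EqOn (fun x => Fex ω h D (τ x)) (fun x => Fex ω h D (x - t i))
          (Set.uIcc (t i) (t i + h)) := by
        intro x hx
        rw [Set.uIcc_of_le (by linarith)] at hx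
        show Fex ω h D (τ x) = Fex ω h D (x - t i)
        rw [hJt x ⟨by linarith [hx.1], hx.2⟩]
        congr 1
        rw [abs_of_nonneg (by linarith [hx.1])]
      rw [intervalIntegral.integral_congr hEq,
        intervalIntegral.integral_comp_sub_right (Fex ω h D) (t i),
        sub_self, show t i + h - t i = h by ring]
      exact Fex_integral_dip hω hh hhD
    show ∫ u in (t i - h)..(t i + h), Fex ω h D (τ u) = 0
    rw [← intervalIntegral.integral_add_adjacent_intervals (b := t i)
      (hφint (t i - h) (t i)) (hφint (t i) (t i + h)), hL, hR, add_zero]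
  · -- integral bound
    set m : ℕ → ℝ := fun j => if j = 0 then a else if j < n then (t j + t (j+1))/2 else b
      with hmdef
    have hm0 : m 0 = a := by simp [hmdef]
    have hmn : m n = b := by simp [hmdef, hn.ne']
    have hmmid : ∀ j, 1 ≤ j → j < n → m j = (t j + t (j+1))/2 := by
      intro j h1 h2
      simp only [hmdef]
      rw [if_neg (by omega), if_pos h2]
    have ht1a : a ≤ t 1 - h := adm.1
    have htnb : t n + h ≤ b := adm.2.2
    have hmle : ∀ i, i < n → m i ≤ t (i+1) ∧ t (i+1) ≤ m (i+1) := by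
      intro i hi
      constructor
      · rcases Nat.eq_zero_or_pos i with h0 | h1
        · rw [h0, hm0]
          have : (0:ℕ) + 1 = 1 := rfl
          rw [this]
          linarith
        · rw [hmmid i h1 hi]
          have := adm_mono hh adm i (i+1) h1 (by omega) (by omega)
          linarith
      · rcases lt_or_eq_of_le (Nat.succ_le_of_lt hi) with hlt | heq
        · rw [hmmid (i+1) (by omega) hlt]
          have := adm_mono hh adm (i+1) (i+2) (by omega) (by omega) (by omega)
          linarith
        · have heq' : i + 1 = n := by omega
          rw [heq', hmn]
          linarith
    have hτL : ∀ i, i < n → ∀ x ∈ Set.Icc (m i) (t (i+1)), τ x = t (i+1) - x := by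
      intro i hi x hx
      apply le_antisymm
      · have := hτle x (i+1) (by omega) (by omega)
        rwa [abs_of_nonpos (by linarith [hx.2]), neg_sub] at this
      · apply hτge
        intro j hj1 hj2
        rcases le_or_gt (i+1) j with hj | hj
        · have := adm_mono hh adm (i+1) j (by omega) hj hj2
          calc t (i+1) - x ≤ t j - x := by linarith
            _ ≤ |x - t j| := by rw [abs_sub_comm]; exact le_abs_self _
        · have h1i : 1 ≤ i := by omega
          have htj : t j ≤ t i := adm_mono hh adm j i hj1 (by omega) (by omega)
          have hmx : (t i + t (i+1))/2 ≤ x := by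
            rw [← hmmid i h1i hi]; exact hx.1
          calc t (i+1) - x ≤ x - t j := by linarith [hx.1]
            _ ≤ |x - t j| := le_abs_self _
    have hτR : ∀ i, i < n → ∀ x ∈ Set.Icc (t (i+1)) (m (i+1)), τ x = x - t (i+1) := by
      intro i hi x hx
      apply le_antisymm
      · have := hτle x (i+1) (by omega) (by omega)
        rwa [abs_of_nonneg (by linarith [hx.1])] at this
      · apply hτge
        intro j hj1 hj2
        rcases le_or_gt j (i+1) with hj | hj
        · have := adm_mono hh adm j (i+1) hj1 hj (by omega)
          calc x - t (i+1) ≤ x - t j := by linarith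
            _ ≤ |x - t j| := le_abs_self _
        · have hin : i + 1 < n := by omega
          have htj : t (i+2) ≤ t j := adm_mono hh adm (i+2) j (by omega) (by omega) hj2
          have hmx : x ≤ (t (i+1) + t (i+2))/2 := by
            rw [← hmmid (i+1) (by omega) hin]; exact hx.2
          calc x - t (i+1) ≤ t j - x := by linarith
            _ ≤ |x - t j| := by rw [abs_sub_comm]; exact le_abs_self _
    have hpiece : ∀ i ∈ Finset.range n, ∫ u in (m i)..(m (i+1)), Fex ω h D (τ u)
        = (∫ r in (0:ℝ)..(t (i+1) - m i), Fex ω h D r)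
          + ∫ r in (0:ℝ)..(m (i+1) - t (i+1)), Fex ω h D r := by
      intro i hi
      rw [Finset.mem_range] at hi
      obtain ⟨hle1, hle2⟩ := hmle i hi
      rw [← intervalIntegral.integral_add_adjacent_intervals (b := t (i+1))
        (hφint (m i) (t (i+1))) (hφint (t (i+1)) (m (i+1)))]
      congr 1
      · have hEq : Set.EqOn (fun x => Fex ω h D (τ x)) (fun x => Fex ω h D (t (i+1) - x))
            (Set.uIcc (m i) (t (i+1))) := by
          intro x hx
          rw [Set.uIcc_of_le hle1] at hx
          show Fex ω h D (τ x) = Fex ω h D (t (i+1) - x)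
          rw [hτL i hi x hx]
        rw [intervalIntegral.integral_congr hEq,
          intervalIntegral.integral_comp_sub_left (Fex ω h D) (t (i+1)),
          sub_self]
      · have hEq : Set.EqOn (fun x => Fex ω h D (τ x)) (fun x => Fex ω h D (x - t (i+1)))
            (Set.uIcc (t (i+1)) (m (i+1))) := by
          intro x hx
          rw [Set.uIcc_of_le hle2] at hx
          show Fex ω h D (τ x) = Fex ω h D (x - t (i+1))
          rw [hτR i hi x hx]
        rw [intervalIntegral.integral_congr hEq,
          intervalIntegral.integral_comp_sub_right (Fex ω h D) (t (i+1)),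
          sub_self]
    have hsum := intervalIntegral.sum_integral_adjacent_intervals
      (a := m) (n := n) (μ := MeasureTheory.volume) (fun k _ => hφint (m k) (m (k+1)))
    rw [hm0, hmn] at hsum
    have htel : ∑ i ∈ Finset.range n, (m (i+1) - m i) = b - a := by
      rw [Finset.sum_range_sub m n, hm0, hmn]
    have htan : ∀ i ∈ Finset.range n,
        2*(∫ r in (0:ℝ)..D, Fex ω h D r) + (m (i+1) - m i - 2*D) * Fex ω h D D
          ≤ (∫ r in (0:ℝ)..(t (i+1) - m i), Fex ω h D r)
            + ∫ r in (0:ℝ)..(m (i+1) - t (i+1)), Fex ω h D r := by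
      intro i hi
      rw [Finset.mem_range] at hi
      obtain ⟨hle1, hle2⟩ := hmle i hi
      have t1 := Fex_tangent hω hconc hh hhD (x := t (i+1) - m i) (by linarith)
      have t2 := Fex_tangent hω hconc hh hhD (x := m (i+1) - t (i+1)) (by linarith)
      linarith
    show 2*(n:ℝ)*(1 - h/D) * (∫ s in (0:ℝ)..D, ω s) ≤ ∫ u in a..b, Fex ω h D (τ u)
    calc 2*(n:ℝ)*(1 - h/D) * (∫ s in (0:ℝ)..D, ω s)
        = ∑ i ∈ Finset.range n,
            (2*(∫ r in (0:ℝ)..D, Fex ω h D r) + (m (i+1) - m i - 2*D) * Fex ω h D D) := by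
          rw [Finset.sum_add_distrib, Finset.sum_const, Finset.card_range, nsmul_eq_mul]
          simp only [sub_mul]
          rw [Finset.sum_sub_distrib,
            Finset.sum_range_sub (fun i => m i * Fex ω h D D) n, hm0, hmn,
            Finset.sum_const, Finset.card_range, nsmul_eq_mul,
            Fex_integral_half hω hconc hh hhD]
          linear_combination (-(Fex ω h D D)) * hba2
      _ ≤ ∑ i ∈ Finset.range n,
            ((∫ r in (0:ℝ)..(t (i+1) - m i), Fex ω h D r)
              + ∫ r in (0:ℝ)..(m (i+1) - t (i+1)), Fex ω h D r) :=
          Finset.sum_le_sum htan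
      _ = ∑ i ∈ Finset.range n, ∫ u in (m i)..(m (i+1)), Fex ω h D (τ u) :=
          (Finset.sum_congr rfl hpiece).symm
      _ = ∫ u in a..b, Fex ω h D (τ u) := hsum

end Lower

/-- Optimal recovery of the integral on `H^ω([a,b],E)` (concave `ω`) from mean values of the
function over `n` intervals of length `2h`: the optimal error equals
`2n(1 − 2nh/(b−a)) ∫_0^{(b−a)/(2n)} ω(t) dt`; it is attained at the uniform knots with the
method `Φ*(y₁,…,y_n) = ((b−a)/n)(y₁ + ⋯ + y_n)`. -/
theorem optimal_recovery_integral_mean_values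
    {E : Type*} [NormedAddCommGroup E] [NormedSpace ℝ E] [CompleteSpace E] [Nontrivial E]
    (ω : ℝ → ℝ) (hω : IsModulus ω) (hconc : ConcaveOn ℝ (Set.Ici 0) ω)
    (a b : ℝ) (hab : a < b) (n : ℕ) (hn : 0 < n) (h : ℝ) (hh : 0 < h)
    (hnh : 2 * (n : ℝ) * h < b - a) :
    (AdmKnots a b h n (uniformKnots a b n) ∧
      ∀ f : ℝ → E, HHolder ω a b f →
        ‖(∫ u in a..b, f u) -
            ((b - a) / (n : ℝ)) • ∑ i : Fin n, meanInfo h n (uniformKnots a b n) f i‖ ≤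
          2 * (n : ℝ) * (1 - 2 * (n : ℝ) * h / (b - a)) *
            ∫ s in (0:ℝ)..((b - a) / (2 * (n : ℝ))), ω s) ∧
    ∀ t : ℕ → ℝ, AdmKnots a b h n t → ∀ Φ : (Fin n → E) → E, ∀ c : ℝ,
      (∀ f : ℝ → E, HHolder ω a b f → ‖(∫ u in a..b, f u) - Φ (meanInfo h n t f)‖ ≤ c) →
      2 * (n : ℝ) * (1 - 2 * (n : ℝ) * h / (b - a)) *
          ∫ s in (0:ℝ)..((b - a) / (2 * (n : ℝ))), ω s ≤ c := by
  have hn' : (0:ℝ) < n := Nat.cast_pos.2 hn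
  have hba : 0 < b - a := by linarith
  have hD : h < (b-a)/(2*(n:ℝ)) := by
    rw [lt_div_iff₀ (by positivity)]; nlinarith
  have hco : 2 * (n:ℝ) * h / (b - a) = h / ((b-a)/(2*(n:ℝ))) := by
    rw [div_div_eq_mul_div]; ring
  constructor
  · constructor
    · -- admissibility of the uniform knots
      refine ⟨?_, ?_, ?_⟩
      · show a ≤ uniformKnots a b n 1 - h
        unfold uniformKnots
        have e1 : (2*((1:ℕ):ℝ)-1) * (b-a) / (2*(n:ℝ)) = (b-a)/(2*(n:ℝ)) := by
          norm_num
        rw [e1]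
        linarith
      · intro i h1 h2
        unfold uniformKnots
        have e1 : (2*((i+1:ℕ):ℝ)-1) * (b-a) / (2*(n:ℝ))
            = (2*((i:ℕ):ℝ)-1) * (b-a) / (2*(n:ℝ)) + (b-a)/(n:ℝ) := by
          push_cast
          field_simp
          ring
        rw [e1]
        have e2 : (b-a)/(n:ℝ) = 2 * ((b-a)/(2*(n:ℝ))) := by
          field_simp
        rw [e2]
        linarith
      · show uniformKnots a b n n + h ≤ b
        unfold uniformKnots
        have e1 : (2*((n:ℕ):ℝ)-1) * (b-a) / (2*(n:ℝ)) = (b-a) - (b-a)/(2*(n:ℝ)) := by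
          field_simp
        rw [e1]
        linarith
    · -- optimal error of the uniform method
      intro f hf
      have hupper := upper_bound_aux hω hab hn hh hnh f hf
      rw [hco]
      exact hupper
  · -- optimality: lower bound for every admissible information/method
    intro t adm Φ c hc
    obtain ⟨φ, hmod, hmeans, hint⟩ := extremal_exists hω hconc hab hn hh hnh adm
    obtain ⟨x, hx⟩ := exists_ne (0 : E)
    have hxn : ‖x‖ ≠ 0 := norm_ne_zero_iff.mpr hx
    set e : E := ‖x‖⁻¹ • x with hedef
    have he : ‖e‖ = 1 := by
      rw [hedef, norm_smul, Real.norm_eq_abs, abs_inv, abs_norm, inv_mul_cancel₀ hxn]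
    have hH1 : HHolder ω a b (fun u => φ u • e) := by
      intro s _ u _
      rw [← sub_smul, norm_smul, he, mul_one, Real.norm_eq_abs]
      exact hmod u s
    have hH2 : HHolder ω a b (fun u => (-φ u) • e) := by
      intro s _ u _
      rw [← sub_smul, norm_smul, he, mul_one, Real.norm_eq_abs,
        show -φ u - -φ s = -(φ u - φ s) by ring, abs_neg]
      exact hmod u s
    have hinfo1 : meanInfo h n t (fun u => φ u • e) = fun _ => (0:E) := by
      funext i
      unfold meanInfo
      rw [intervalIntegral.integral_smul_const,
        hmeans ((i:ℕ)+1) (by omega) (by omega : (i:ℕ)+1 ≤ n), zero_smul, smul_zero]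
    have hinfo2 : meanInfo h n t (fun u => (-φ u) • e) = fun _ => (0:E) := by
      funext i
      unfold meanInfo
      rw [intervalIntegral.integral_smul_const, intervalIntegral.integral_neg,
        hmeans ((i:ℕ)+1) (by omega) (by omega : (i:ℕ)+1 ≤ n), neg_zero, zero_smul, smul_zero]
    have h1 := hc _ hH1
    have h2 := hc _ hH2
    rw [hinfo1] at h1
    rw [hinfo2] at h2
    rw [intervalIntegral.integral_smul_const] at h1 h2
    rw [intervalIntegral.integral_neg] at h2
    set I : ℝ := ∫ u in a..b, φ u with hIdef
    have hdist : ‖(I • e) - ((-I) • e)‖ ≤ 2 * c := by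
      calc ‖(I • e) - ((-I) • e)‖
          ≤ ‖(I • e) - Φ (fun _ => (0:E))‖ + ‖((-I) • e) - Φ (fun _ => (0:E))‖ := by
            have := norm_sub_le_norm_sub_add_norm_sub (I • e) (Φ (fun _ => (0:E))) ((-I) • e)
            rw [norm_sub_rev (Φ (fun _ => (0:E))) ((-I) • e)] at this
            exact this
        _ ≤ c + c := add_le_add h1 h2
        _ = 2 * c := by ring
    have hnorm : ‖(I • e) - ((-I) • e)‖ = 2 * |I| := by
      rw [show (I • e) - ((-I) • e) = (2*I) • e by rw [← sub_smul]; congr 1; ring,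
        norm_smul, he, mul_one, Real.norm_eq_abs, abs_mul, abs_two]
    have hIc : |I| ≤ c := by
      rw [hnorm] at hdist
      linarith
    rw [hco]
    calc 2 * (n:ℝ) * (1 - h / ((b-a)/(2*(n:ℝ)))) * ∫ s in (0:ℝ)..((b-a)/(2*(n:ℝ))), ω s
        ≤ I := hint
      _ ≤ |I| := le_abs_self I
      _ ≤ c := hIc
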